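/- The 2×2 matrix C = (1/25)·[[9, 3],[0, 16]] cannot be written as a product A·B of two positive semidefinite 2×2 complex matrices A, B each of operator norm at most 1. -/

import Mathlib

open scoped ComplexOrder
open Matrix

lemma one_sub_psd (A : Matrix (Fin 2) (Fin 2) ℂ) (hA : A.PosSemidef)
    (h : ‖Matrix.toEuclideanCLM (𝕜 := ℂ) A‖ ≤ 1) : (1 - A).PosSemidef := by
  refine Matrix.PosSemidef.of_dotProduct_mulVec_nonneg ?_ ?_
  · exact Matrix.isHermitian_one.sub hA.1
  · intro x
    set T := Matrix.toEuclideanCLM (𝕜 := ℂ) A with hT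
    set x' : EuclideanSpace ℂ (Fin 2) := (WithLp.equiv 2 _).symm x with hx'
    have hTx : T x' = (WithLp.equiv 2 _).symm (A *ᵥ x) := by
      rw [hx', hT]; rfl
    have hnorm : ‖T x'‖ ≤ ‖x'‖ := by
      calc ‖T x'‖ ≤ ‖T‖ * ‖x'‖ := T.le_opNorm x'
        _ ≤ 1 * ‖x'‖ := by gcongr
        _ = ‖x'‖ := one_mul _
    have hinner : (inner ℂ x' (T x') : ℂ) = star x ⬝ᵥ A *ᵥ x := by
      rw [hTx, EuclideanSpace.inner_eq_star_dotProduct, dotProduct_comm]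
      rfl
    have hself : (inner ℂ x' x' : ℂ) = star x ⬝ᵥ x := by
      rw [EuclideanSpace.inner_eq_star_dotProduct, dotProduct_comm]
      rfl
    have h0 : (0 : ℂ) ≤ star x ⬝ᵥ A *ᵥ x := hA.dotProduct_mulVec_nonneg x
    have hw : star x ⬝ᵥ x = ((‖x'‖ : ℂ) ^ 2) := by
      rw [← hself, inner_self_eq_norm_sq_to_K]
      rfl
    have hre : (star x ⬝ᵥ A *ᵥ x).re ≤ ‖x'‖ ^ 2 := by
      have h1 : (star x ⬝ᵥ A *ᵥ x).re ≤ ‖(star x ⬝ᵥ A *ᵥ x : ℂ)‖ := Complex.re_le_norm _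
      refine h1.trans ?_
      calc ‖(star x ⬝ᵥ A *ᵥ x : ℂ)‖ = ‖(inner ℂ x' (T x') : ℂ)‖ := by rw [hinner]
        _ ≤ ‖x'‖ * ‖T x'‖ := norm_inner_le_norm _ _
        _ ≤ ‖x'‖ * ‖x'‖ := by gcongr
        _ = ‖x'‖ ^ 2 := (sq ‖x'‖).symm
    have h2 : ((‖x'‖ : ℂ) ^ 2).re = ‖x'‖ ^ 2 := by
      rw [← Complex.ofReal_pow, Complex.ofReal_re]
    have h3 : ((‖x'‖ : ℂ) ^ 2).im = 0 := by
      rw [← Complex.ofReal_pow, Complex.ofReal_im]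
    have him : (star x ⬝ᵥ A *ᵥ x).im = 0 := by
      have := (Complex.le_def.mp h0).2
      simpa using this.symm
    have hle : star x ⬝ᵥ A *ᵥ x ≤ star x ⬝ᵥ x := by
      rw [hw, Complex.le_def]
      exact ⟨by rw [h2]; exact hre, by rw [him, h3]⟩
    have heq : star x ⬝ᵥ (1 - A) *ᵥ x = star x ⬝ᵥ x - star x ⬝ᵥ A *ᵥ x := by
      rw [Matrix.sub_mulVec, Matrix.one_mulVec, dotProduct_sub]
    rw [heq]
    exact sub_nonneg.mpr hle

lemma key3 (p r s u : ℝ) (hp1 : p ≤ 1) (hu1 : u ≤ 1) (hr0 : 0 ≤ r) (hr1 : r ≤ 1)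
    (hs0 : 0 ≤ s) (hs1 : s ≤ 1)
    (h1 : p*s - 9/49*(r*s) = 9/25) (h2 : r*u - 9/49*(r*s) = 16/25)
    (hLA : 0 ≤ 9*(1-p) - 36/7*r + 4*(1-r)) (hLB : 0 ≤ (1-s) - 12/7*s + 4*(1-u)) : False := by
  nlinarith [mul_nonneg hr0 hs0, mul_nonneg hs0 hLA, mul_nonneg hr0 hLB, sq_nonneg (r-s),
    sq_nonneg (r+s), mul_nonneg hr0 hr0, mul_nonneg hs0 hs0]

-- extract: 0 ≤ diagonal entries of a PSD matrix
lemma diag_re (M : Matrix (Fin 2) (Fin 2) ℂ) (hM : M.PosSemidef) (i : Fin 2) :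
    0 ≤ (M i i).re ∧ M i i = ((M i i).re : ℂ) := by
  have h := hM.dotProduct_mulVec_nonneg (fun j => if j = i then 1 else 0)
  have hval : star (fun j => if j = i then 1 else 0) ⬝ᵥ M *ᵥ (fun j => if j = i then 1 else 0)
      = M i i := by
    fin_cases i <;>
      simp [dotProduct, Matrix.mulVec, Fin.sum_univ_two]
  rw [hval] at h
  obtain ⟨h1, h2⟩ := Complex.le_def.mp h
  exact ⟨by simpa using h1, Complex.ext rfl (by simpa using h2.symm)⟩

/-- The matrix `(1/25)·[[9, 3],[0, 16]]` is not a product of two positive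
semidefinite 2×2 complex matrices each of operator norm at most 1. -/
theorem example_matrix_not_product_of_two_positive_contractions :
    ¬ ∃ A B : Matrix (Fin 2) (Fin 2) ℂ,
        A.PosSemidef ∧ ‖Matrix.toEuclideanCLM (𝕜 := ℂ) A‖ ≤ 1 ∧
        B.PosSemidef ∧ ‖Matrix.toEuclideanCLM (𝕜 := ℂ) B‖ ≤ 1 ∧
        A * B = (1 / 25 : ℂ) • !![9, 3; 0, 16] := by
  rintro ⟨A, B, hA, hnA, hB, hnB, hC⟩
  have h1A := one_sub_psd A hA hnA
  have h1B := one_sub_psd B hB hnB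
  -- B * A = (A*B)ᴴ
  have hBA : B * A = ((1 / 25 : ℂ) • !![9, 3; 0, 16])ᴴ := by
    rw [← hC, Matrix.conjTranspose_mul, hA.1, hB.1]
  -- entry relations from C * A = A * Cᴴ and B * C = Cᴴ * B
  have hCA : ((1 / 25 : ℂ) • !![9, 3; 0, 16]) * A = A * ((1 / 25 : ℂ) • !![9, 3; 0, 16])ᴴ := by
    calc ((1 / 25 : ℂ) • !![9, 3; 0, 16]) * A = (A * B) * A := by rw [hC]
      _ = A * (B * A) := by rw [mul_assoc]
      _ = _ := by rw [hBA]
  have hBC : B * ((1 / 25 : ℂ) • !![9, 3; 0, 16]) = ((1 / 25 : ℂ) • !![9, 3; 0, 16])ᴴ * B := by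
    calc B * ((1 / 25 : ℂ) • !![9, 3; 0, 16]) = B * (A * B) := by rw [hC]
      _ = (B * A) * B := by rw [mul_assoc]
      _ = _ := by rw [hBA]
  -- real diagonal entries
  obtain ⟨hp0, hpeq⟩ := diag_re A hA 0
  obtain ⟨hr0, hreq⟩ := diag_re A hA 1
  obtain ⟨hs0, hseq⟩ := diag_re B hB 0
  obtain ⟨hu0, hueq⟩ := diag_re B hB 1
  set p := (A 0 0).re
  set r := (A 1 1).re
  set s := (B 0 0).re
  set u := (B 1 1).re
  -- off-diagonal of A : from (C*A) 0 1 = (A*Cᴴ) 0 1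
  have eA : A 0 1 = 3 * (r : ℂ) / 7 := by
    have e := congrFun (congrFun hCA 0) 1
    simp [Matrix.mul_apply, Fin.sum_univ_two, Matrix.conjTranspose_apply, map_ofNat] at e
    rw [hreq] at e
    linear_combination (-25/7 : ℂ) * e
  have eA' : A 1 0 = 3 * (r : ℂ) / 7 := by
    have hc := congrFun (congrFun hA.1 0) 1
    simp [Matrix.conjTranspose_apply] at hc
    have h2 := congrArg (starRingEnd ℂ) hc
    simpa [eA, map_div₀, map_ofNat, Complex.conj_ofReal] using h2
  have eB : B 0 1 = -(3 * (s : ℂ) / 7) := by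
    have e := congrFun (congrFun hBC 0) 1
    simp [Matrix.mul_apply, Fin.sum_univ_two, Matrix.conjTranspose_apply, map_ofNat] at e
    rw [hseq] at e
    linear_combination (25/7 : ℂ) * e
  have eB' : B 1 0 = -(3 * (s : ℂ) / 7) := by
    have hc := congrFun (congrFun hB.1 0) 1
    simp [Matrix.conjTranspose_apply] at hc
    have h2 := congrArg (starRingEnd ℂ) hc
    simpa [eB, map_div₀, map_ofNat, Complex.conj_ofReal] using h2
  -- the two real equations from A * B = C
  have h1 : p * s - 9/49 * (r * s) = 9/25 := by
    have e := congrFun (congrFun hC 0) 0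
    simp [Matrix.mul_apply, Fin.sum_univ_two] at e
    rw [hpeq, hseq, eA, eB'] at e
    have : ((p * s - 9/49 * (r * s) : ℝ) : ℂ) = ((9/25 : ℝ) : ℂ) := by
      push_cast
      linear_combination e
    exact_mod_cast this
  have h2 : r * u - 9/49 * (r * s) = 16/25 := by
    have e := congrFun (congrFun hC 1) 1
    simp [Matrix.mul_apply, Fin.sum_univ_two] at e
    rw [hreq, hueq, eA', eB] at e
    have : ((r * u - 9/49 * (r * s) : ℝ) : ℂ) = ((16/25 : ℝ) : ℂ) := by
      push_cast
      linear_combination e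
    exact_mod_cast this
  -- bounds from 1 - A, 1 - B PSD (diagonal)
  obtain ⟨hp1', hpeq1⟩ := diag_re _ h1A 0
  obtain ⟨hr1', _⟩ := diag_re _ h1A 1
  obtain ⟨hs1', _⟩ := diag_re _ h1B 0
  obtain ⟨hu1', _⟩ := diag_re _ h1B 1
  have hp1 : p ≤ 1 := by
    have : ((1 - A) 0 0).re = 1 - p := by simp [Matrix.sub_apply, Matrix.one_apply]; rfl
    rw [this] at hp1'; linarith
  have hr1 : r ≤ 1 := by
    have : ((1 - A) 1 1).re = 1 - r := by simp [Matrix.sub_apply, Matrix.one_apply]; rfl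
    rw [this] at hr1'; linarith
  have hs1 : s ≤ 1 := by
    have : ((1 - B) 0 0).re = 1 - s := by simp [Matrix.sub_apply, Matrix.one_apply]; rfl
    rw [this] at hs1'; linarith
  have hu1 : u ≤ 1 := by
    have : ((1 - B) 1 1).re = 1 - u := by simp [Matrix.sub_apply, Matrix.one_apply]; rfl
    rw [this] at hu1'; linarith
  -- quadratic form of 1 - A at ![3, 2]
  have hLA : 0 ≤ 9*(1-p) - 36/7*r + 4*(1-r) := by
    have h := h1A.dotProduct_mulVec_nonneg ![3, 2]
    have hval : star (![3, 2] : Fin 2 → ℂ) ⬝ᵥ (1 - A) *ᵥ ![3, 2]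
        = ((9*(1-p) - 36/7*r + 4*(1-r) : ℝ) : ℂ) := by
      simp [dotProduct, Matrix.mulVec, Fin.sum_univ_two, Matrix.sub_apply,
        Matrix.one_apply, hpeq, hreq, eA, eA', map_ofNat, Complex.conj_ofReal]
      push_cast
      ring
    rw [hval] at h
    exact_mod_cast h
  have hLB : 0 ≤ (1-s) - 12/7*s + 4*(1-u) := by
    have h := h1B.dotProduct_mulVec_nonneg ![-1, 2]
    have hval : star (![-1, 2] : Fin 2 → ℂ) ⬝ᵥ (1 - B) *ᵥ ![-1, 2]
        = (((1-s) - 12/7*s + 4*(1-u) : ℝ) : ℂ) := by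
      simp [dotProduct, Matrix.mulVec, Fin.sum_univ_two, Matrix.sub_apply,
        Matrix.one_apply, hseq, hueq, eB, eB', map_ofNat, Complex.conj_ofReal]
      push_cast
      ring
    rw [hval] at h
    exact_mod_cast h
  exact key3 p r s u hp1 hu1 hr0 hr1 hs0 hs1 h1 h2 hLA hLB
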